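/- Let p be a prime and n ≥ 1 an integer, and let L = ⌊log_p(n)⌋. Then the p-adic valuation of n satisfies ν_p(n) = ⌊ (gcd(n, p^(L+1))^(L+3) mod (p^(L+3) − 1)²) / (p^(L+3) − 1) ⌋. -/

import Mathlib

lemma binom_aux_stmt18 (M k : ℕ) : ∃ c, (M + 1) ^ k = 1 + k * M + M ^ 2 * c := by
  induction k with
  | zero => exact ⟨0, by ring⟩
  | succ k ih =>
    obtain ⟨c, hc⟩ := ih
    exact ⟨k + c * (M + 1), by rw [pow_succ, hc]; ring⟩

/-- Efficient arithmetic term for the p-adic valuation, with `L = ⌊log_p(n)⌋`. -/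
theorem stmt_18 (p n : ℕ) (hp : p.Prime) (hn : 1 ≤ n) (L : ℕ) (hL : L = Nat.log p n) :
    padicValNat p n =
      (Nat.gcd n (p ^ (L + 1))) ^ (L + 3) % (p ^ (L + 3) - 1) ^ 2 / (p ^ (L + 3) - 1) := by
  set ν := padicValNat p n with hν
  have hp1 : 1 < p := hp.one_lt
  have hn0 : n ≠ 0 := by omega
  have hdvd : p ^ ν ∣ n := pow_padicValNat_dvd
  have hνL : ν ≤ L := by
    rw [hL, Nat.le_log_iff_pow_le hp1 hn0]
    exact Nat.le_of_dvd (by omega) hdvd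
  have hgcd : Nat.gcd n (p ^ (L + 1)) = p ^ ν := by
    obtain ⟨j, hj, hje⟩ := (Nat.dvd_prime_pow hp).mp (Nat.gcd_dvd_right n (p ^ (L + 1)))
    have hjn : p ^ j ∣ n := hje ▸ Nat.gcd_dvd_left _ _
    have hjν : j ≤ ν := by
      rw [hν, ← Nat.factorization_def n hp]
      exact (Nat.Prime.pow_dvd_iff_le_factorization hp hn0).mp hjn
    have hνj : ν ≤ j := by
      have : p ^ ν ∣ p ^ j :=
        hje ▸ Nat.dvd_gcd hdvd (pow_dvd_pow p (by omega))
      exact (Nat.pow_dvd_pow_iff_le_right hp1).mp this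
    rw [hje, le_antisymm hjν hνj]
  set M := p ^ (L + 3) - 1 with hM
  have hpL : L + 3 ≤ p ^ (L + 3) := Nat.le_of_lt (Nat.lt_pow_self hp1)
  have hM2 : L + 2 ≤ M := by omega
  have hM1 : M + 1 = p ^ (L + 3) := by omega
  have key : (p ^ ν) ^ (L + 3) = (M + 1) ^ ν := by
    rw [hM1, ← pow_mul, ← pow_mul, Nat.mul_comm]
  obtain ⟨c, hc⟩ := binom_aux_stmt18 M ν
  rw [hgcd, key, hc]
  have hlt : 1 + ν * M < M ^ 2 := by
    have : ν * M ≤ L * M := Nat.mul_le_mul_right _ hνL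
    have hLM : L < M := by omega
    nlinarith
  rw [Nat.add_mul_mod_self_left, Nat.mod_eq_of_lt hlt]
  rw [Nat.add_mul_div_right _ _ (by omega : 0 < M), Nat.div_eq_of_lt (by omega : 1 < M)]
  omega
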